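/- Let G be an Artin group with all labels m_{ij} ≥ 7, let X be its coned-off Cayley graph with respect to the parabolic subgroups G_{ij} with m_{ij} < ∞, and let α be a geodesic in X between two vertices of G. If α is decomposed into maximal Γ-blocks and cone-blocks α₁⋯α_t, and α_{k-1}, α_k, α_{k+1} are three consecutive cone-blocks with labels v_{k-1} ∈ G_{ij}, v_k ∈ G_{js}, v_{k+1} ∈ G_{sq}, such that the first syllable of v_k is a power of a_j and the last syllable of v_k is a power of a_s, then the syllable length of v_k is at least 3. -/

import Mathlib

/-- Vertices of the coned-off Cayley graph `Γ̂_A(G; H)`: the elements of `G`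
(vertices of the Cayley graph) together with one cone vertex `v(gHᵢ)` for each
coset of each subgroup `Hᵢ`. -/
inductive ConedVert (G : Type*) [Group G] {ι : Type*} (H : ι → Subgroup G) : Type _
  | grp : G → ConedVert G H
  | cone : (i : ι) → G ⧸ H i → ConedVert G H

/-- Adjacency in the coned-off Cayley graph: Cayley-graph edges between group
elements differing by a generator in `A`, and cone edges between a cone vertex
`v(gHᵢ)` and the elements of the coset `gHᵢ`. -/
def conedAdj {G : Type*} [Group G] {ι : Type*} (A : Set G) (H : ι → Subgroup G) :
    ConedVert G H → ConedVert G H → Prop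
  | .grp g, .grp g' => ∃ a ∈ A, g' = g * a ∨ g = g' * a
  | .grp g, .cone i c => (QuotientGroup.mk g : G ⧸ H i) = c
  | .cone i c, .grp g => (QuotientGroup.mk g : G ⧸ H i) = c
  | .cone _ _, .cone _ _ => False

/-- Edge lengths in the coned-off Cayley graph: Cayley edges have length `1`,
cone edges have length `1/2`. -/
noncomputable def conedWt {G : Type*} [Group G] {ι : Type*} (H : ι → Subgroup G) :
    ConedVert G H → ConedVert G H → ℝ
  | .grp _, .grp _ => 1
  | _, _ => 1 / 2

/-- The length of an edge path, given edge lengths `w`. -/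
noncomputable def pathCost {V : Type*} (w : V → V → ℝ) : List V → ℝ
  | x :: y :: l => w x y + pathCost w (y :: l)
  | _ => 0

/-- `p` is an edge path from `x` to `y` for the adjacency relation `Adj`. -/
def IsPathFrom {V : Type*} (Adj : V → V → Prop) (p : List V) (x y : V) : Prop :=
  p.head? = some x ∧ p.getLast? = some y ∧ p.Chain' Adj

/-- The path metric of the coned-off Cayley graph `Γ̂_A(G; H)`: the infimum of the
lengths of edge paths joining two vertices. -/
noncomputable def conedDist {G : Type*} [Group G] {ι : Type*} (A : Set G)
    (H : ι → Subgroup G) (x y : ConedVert G H) : ℝ :=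
  sInf { c | ∃ p, IsPathFrom (conedAdj A H) p x y ∧ pathCost (conedWt H) p = c }

/-- A distance function is Gromov-hyperbolic if it satisfies the four-point
condition: `d(x,y) + d(z,w) ≤ max (d(x,z) + d(y,w)) (d(x,w) + d(y,z)) + δ`. -/
def IsGromovHyperbolicDist {V : Type*} (d : V → V → ℝ) : Prop :=
  ∃ δ : ℝ, 0 ≤ δ ∧ ∀ x y z w, d x y + d z w ≤ max (d x z + d y w) (d x w + d y z) + δ

/-- The alternating word `x y x y ⋯` with `m` letters, in the free group. -/
def altWord {σ : Type*} (x y : σ) : ℕ → FreeGroup σ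
  | 0 => 1
  | m + 1 => FreeGroup.of x * altWord y x m

/-- The defining relators `u_{ij} u_{ji}⁻¹` of the Artin group with Coxeter-type
labels `M : Fin n → Fin n → ℕ∞` (relations with `M i j = ∞` are omitted). -/
def artinRels (n : ℕ) (M : Fin n → Fin n → ℕ∞) : Set (FreeGroup (Fin n)) :=
  { r | ∃ i j : Fin n, i ≠ j ∧ ∃ m : ℕ, M i j = (m : ℕ∞) ∧
      r = altWord i j m * (altWord j i m)⁻¹ }

/-- The quotient map from the free group onto the Artin group with labels `M`. -/
def artinMk (n : ℕ) (M : Fin n → Fin n → ℕ∞) :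
    FreeGroup (Fin n) →* PresentedGroup (artinRels n M) :=
  PresentedGroup.mk _

/-- The index type of the non-free two-generator parabolic subgroups: pairs
`i < j` with `m_{ij} < ∞`. -/
def FinitePairs (n : ℕ) (M : Fin n → Fin n → ℕ∞) : Type :=
  { p : Fin n × Fin n // p.1 < p.2 ∧ M p.1 p.2 ≠ ⊤ }

/-- The parabolic subgroup `G_{ij} = ⟨a_i, a_j⟩` for a pair with `m_{ij} < ∞`. -/
def parabolic (n : ℕ) (M : Fin n → Fin n → ℕ∞) (p : FinitePairs n M) :
    Subgroup (PresentedGroup (artinRels n M)) :=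
  Subgroup.closure {artinMk n M (FreeGroup.of p.1.1), artinMk n M (FreeGroup.of p.1.2)}

/-- The syllable length `‖w‖`: the number of maximal blocks of the form `a^n`
in the reduced word representing `w`. -/
def syll {σ : Type*} [DecidableEq σ] (w : FreeGroup σ) : ℕ :=
  ((w.toWord.map Prod.fst).destutter (· ≠ ·)).length

section auxLemmas

lemma aux_destutter'_le_one {σ : Type*} [DecidableEq σ] (K : List σ) (a : σ)
    (h : (K.destutter' (· ≠ ·) a).length ≤ 1) : ∀ x ∈ K, x = a := by
  induction K generalizing a with
  | nil => simp
  | cons b K ih =>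
    by_cases hab : a ≠ b
    · rw [List.destutter'_cons_pos _ hab] at h
      exfalso
      simp only [List.length_cons] at h
      exact absurd (List.eq_nil_of_length_eq_zero (Nat.le_zero.mp (Nat.le_of_succ_le_succ h)))
        (K.destutter'_ne_nil _)
    · push_neg at hab
      subst hab
      rw [List.destutter'_cons_neg _ (by simp)] at h
      intro x hx
      rcases List.mem_cons.1 hx with rfl | hx
      · rfl
      · exact ih a h x hx

lemma aux_destutter'_le_two {σ : Type*} [DecidableEq σ] (K : List σ) (a : σ)
    (h : (K.destutter' (· ≠ ·) a).length ≤ 2) :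
    ∃ n b m, a :: K = List.replicate n a ++ List.replicate m b := by
  induction K generalizing a with
  | nil => exact ⟨1, a, 0, by simp⟩
  | cons c K ih =>
    by_cases hac : a ≠ c
    · rw [List.destutter'_cons_pos _ hac] at h
      simp only [List.length_cons] at h
      have hK : ∀ x ∈ K, x = c := aux_destutter'_le_one K c (Nat.le_of_succ_le_succ h)
      refine ⟨1, c, K.length + 1, ?_⟩
      have hall : ∀ x ∈ c :: K, x = c := by
        intro x hx
        rcases List.mem_cons.1 hx with rfl | hx
        · rfl
        · exact hK x hx
      have h2 := (List.eq_replicate_length (l := c :: K) (a := c)).2 hall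
      have hcK : c :: K = List.replicate (K.length + 1) c := by simpa using h2
      simp [hcK]
    · push_neg at hac
      subst hac
      rw [List.destutter'_cons_neg _ (by simp)] at h
      obtain ⟨n, b, m, hnb⟩ := ih a h
      exact ⟨n + 1, b, m, by rw [List.replicate_succ, List.cons_append, ← hnb]⟩

lemma aux_getLast_replicate {σ : Type*} (b : σ) (m : ℕ) :
    (List.replicate (m + 1) b).getLast? = some b := by
  induction m with
  | zero => rfl
  | succ m ih => rw [List.replicate_succ, List.getLast?_cons, ih]; rfl

lemma aux_mk_mem_closure {σ : Type*} (j : σ) (L : List (σ × Bool)) (h : ∀ l ∈ L, l.1 = j) :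
    FreeGroup.mk L ∈ Subgroup.closure {FreeGroup.of j} := by
  induction L with
  | nil =>
    have h1 : (FreeGroup.mk [] : FreeGroup σ) = 1 := rfl
    rw [h1]; exact Subgroup.one_mem _
  | cons x L ih =>
    have hx : x.1 = j := h x List.mem_cons_self
    have hmul : FreeGroup.mk (x :: L) = FreeGroup.mk [x] * FreeGroup.mk L := by
      rw [FreeGroup.mul_mk]; rfl
    rw [hmul]
    refine Subgroup.mul_mem _ ?_ (ih fun l hl => h l (List.mem_cons_of_mem _ hl))
    rcases x with ⟨y, b⟩
    have hx' : y = j := hx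
    rw [hx']
    cases b with
    | true =>
      have h1 : FreeGroup.mk [(j, true)] = FreeGroup.of j := rfl
      rw [h1]
      exact Subgroup.subset_closure rfl
    | false =>
      have h1 : FreeGroup.mk [(j, false)] = (FreeGroup.of j)⁻¹ := by
        rw [show (FreeGroup.of j : FreeGroup σ) = FreeGroup.mk [(j, true)] from rfl,
          FreeGroup.inv_mk]
        rfl
      rw [h1]
      exact Subgroup.inv_mem _ (Subgroup.subset_closure rfl)

lemma aux_pathCost_nonneg {V : Type*} (w : V → V → ℝ) (hw : ∀ x y, 0 ≤ w x y) :
    ∀ p : List V, 0 ≤ pathCost w p := by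
  intro p
  induction p with
  | nil => simp [pathCost]
  | cons x p ih =>
    cases p with
    | nil => simp [pathCost]
    | cons y l => exact add_nonneg (hw x y) ih

end auxLemmas

/-- Let `G` be an Artin group with all labels `m_{ij} ≥ 7` and `X` its coned-off
Cayley graph.  Suppose three consecutive cone-blocks of a geodesic of `X` join `1`
to `g₁ g₂ g₃` (so the distance from `1` to `g₁ g₂ g₃` in `X` is `3`), with
`g₁ ∈ G_{ij}`, `g₂ ∈ G_{js}`, `g₃ ∈ G_{sq}` all nontrivial and consecutive pairs
of indices distinct.  If `v` is a freely reduced word in `{a_j, a_s}` of minimal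
syllable length representing `g₂` whose first syllable is a power of `a_j` and
whose last syllable is a power of `a_s`, then `‖v‖ ≥ 3`. -/

theorem cone_block_syllable_ge_three (n : ℕ) (M : Fin n → Fin n → ℕ∞)
    (hsym : ∀ i' j', M i' j' = M j' i') (hM : ∀ i' j', i' ≠ j' → 7 ≤ M i' j')
    (i j s q : Fin n) (hij : i ≠ j) (hjs : j ≠ s) (hsq : s ≠ q)
    (hpair₁ : ({i, j} : Set (Fin n)) ≠ {j, s}) (hpair₂ : ({j, s} : Set (Fin n)) ≠ {s, q})
    (hfij : M i j ≠ ⊤) (hfjs : M j s ≠ ⊤) (hfsq : M s q ≠ ⊤)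
    (g₁ g₂ g₃ : PresentedGroup (artinRels n M))
    (hg₁ : g₁ ∈ Subgroup.closure {artinMk n M (FreeGroup.of i), artinMk n M (FreeGroup.of j)})
    (hg₂ : g₂ ∈ Subgroup.closure {artinMk n M (FreeGroup.of j), artinMk n M (FreeGroup.of s)})
    (hg₃ : g₃ ∈ Subgroup.closure {artinMk n M (FreeGroup.of s), artinMk n M (FreeGroup.of q)})
    (hg₁' : g₁ ≠ 1) (hg₂' : g₂ ≠ 1) (hg₃' : g₃ ≠ 1)
    (hgeo : conedDist (Set.range fun l => artinMk n M (FreeGroup.of l)) (parabolic n M)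
      (.grp 1) (.grp (g₁ * g₂ * g₃)) = 3)
    (v : FreeGroup (Fin n)) (hv : artinMk n M v = g₂)
    (hletters : ∀ l ∈ v.toWord, l.1 = j ∨ l.1 = s)
    (hmin : ∀ w : FreeGroup (Fin n), artinMk n M w = g₂ →
      (∀ l ∈ w.toWord, l.1 = j ∨ l.1 = s) → syll v ≤ syll w)
    (hfirst : v.toWord.head?.map Prod.fst = some j)
    (hlast : v.toWord.getLast?.map Prod.fst = some s) :
    3 ≤ syll v := by
  by_contra hcon
  push_neg at hcon
  -- Split the word of v into a j-block followed by an s-block.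
  set W := v.toWord with hW
  set K := W.map Prod.fst with hKdef
  have hKhead : K.head? = some j := by rw [hKdef, List.head?_map]; exact hfirst
  have hKlast : K.getLast? = some s := by rw [hKdef, List.getLast?_map]; exact hlast
  obtain ⟨j', K₀, hK⟩ : ∃ j' K₀, K = j' :: K₀ := by
    cases hKc : K with
    | nil => rw [hKc] at hKhead; simp at hKhead
    | cons a l => exact ⟨a, l, rfl⟩
  have hj' : j' = j := by rw [hK] at hKhead; simpa using hKhead
  rw [hj'] at hK
  have hlen : (K₀.destutter' (· ≠ ·) j).length ≤ 2 := by
    have hsy : syll v = ((j :: K₀).destutter (· ≠ ·)).length := by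
      rw [syll, ← hKdef, hK]
    rw [List.destutter_cons'] at hsy
    omega
  obtain ⟨a, b, m, hrep⟩ := aux_destutter'_le_two K₀ j hlen
  rw [← hK] at hrep
  have hbs : K = List.replicate a j ++ List.replicate m b ∧ b = s ∧ 1 ≤ m := by
    rcases Nat.eq_zero_or_pos m with hm | hm
    · exfalso
      subst hm
      simp only [List.replicate_zero, List.append_nil] at hrep
      rw [hrep] at hKlast
      rcases Nat.eq_zero_or_pos a with ha | ha
      · rw [ha] at hKlast; simp at hKlast
      · obtain ⟨a', rfl⟩ := Nat.exists_eq_add_of_le ha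
        rw [Nat.add_comm, aux_getLast_replicate] at hKlast
        exact hjs (Option.some.inj hKlast)
    · obtain ⟨m', rfl⟩ := Nat.exists_eq_add_of_le hm
      rw [hrep, List.getLast?_append, Nat.add_comm, aux_getLast_replicate] at hKlast
      simp only [Option.some_or] at hKlast
      exact ⟨hrep, Option.some.inj hKlast, by omega⟩
  obtain ⟨hrep'', hb, -⟩ := hbs
  rw [hb] at hrep''
  clear hrep
  -- split W into the two blocks
  set L₁ := W.take a with hL₁
  set L₂ := W.drop a with hL₂
  have hsplit : W = L₁ ++ L₂ := (List.take_append_drop a W).symm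
  have hlenrep : (List.replicate a j).length = a := List.length_replicate
  have hmapL₁ : L₁.map Prod.fst = List.replicate a j := by
    rw [hL₁, List.map_take, ← hKdef, hrep'', List.take_append_of_le_length (le_of_eq hlenrep.symm),
      List.take_replicate]
    simp
  have hmapL₂ : L₂.map Prod.fst = List.replicate m s := by
    rw [hL₂, List.map_drop, ← hKdef, hrep'', List.drop_append_of_le_length (le_of_eq hlenrep.symm),
      List.drop_replicate]
    simp
  have hL₁j : ∀ l ∈ L₁, l.1 = j := by
    intro l hl
    exact List.eq_of_mem_replicate (hmapL₁ ▸ List.mem_map_of_mem (f := Prod.fst) hl)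
  have hL₂s : ∀ l ∈ L₂, l.1 = s := by
    intro l hl
    exact List.eq_of_mem_replicate (hmapL₂ ▸ List.mem_map_of_mem (f := Prod.fst) hl)
  -- the two group elements
  set P₁ := artinMk n M (FreeGroup.mk L₁) with hP₁def
  set P₂ := artinMk n M (FreeGroup.mk L₂) with hP₂def
  have hvP : P₁ * P₂ = g₂ := by
    rw [hP₁def, hP₂def, ← map_mul, FreeGroup.mul_mk, ← hsplit, hW, FreeGroup.mk_toWord, hv]
  have hP₁mem : P₁ ∈ Subgroup.closure
      {artinMk n M (FreeGroup.of i), artinMk n M (FreeGroup.of j)} := by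
    have h1 : FreeGroup.mk L₁ ∈ Subgroup.closure {FreeGroup.of j} := aux_mk_mem_closure j L₁ hL₁j
    have h2 : P₁ ∈ (Subgroup.closure {FreeGroup.of j}).map (artinMk n M) :=
      Subgroup.mem_map_of_mem _ h1
    rw [MonoidHom.map_closure, Set.image_singleton] at h2
    exact Subgroup.closure_mono (Set.singleton_subset_iff.2 (by right; rfl)) h2
  have hP₂mem : P₂ ∈ Subgroup.closure
      {artinMk n M (FreeGroup.of s), artinMk n M (FreeGroup.of q)} := by
    have h1 : FreeGroup.mk L₂ ∈ Subgroup.closure {FreeGroup.of s} := aux_mk_mem_closure s L₂ hL₂s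
    have h2 : P₂ ∈ (Subgroup.closure {FreeGroup.of s}).map (artinMk n M) :=
      Subgroup.mem_map_of_mem _ h1
    rw [MonoidHom.map_closure, Set.image_singleton] at h2
    exact Subgroup.closure_mono (Set.singleton_subset_iff.2 (by left; rfl)) h2
  -- the two parabolic subgroups
  obtain ⟨p₁, hp₁⟩ : ∃ p : FinitePairs n M, parabolic n M p = Subgroup.closure
      {artinMk n M (FreeGroup.of i), artinMk n M (FreeGroup.of j)} := by
    rcases lt_or_gt_of_ne hij with h | h
    · exact ⟨⟨(i, j), h, hfij⟩, rfl⟩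
    · refine ⟨⟨(j, i), h, by rw [hsym]; exact hfij⟩, ?_⟩
      simp [parabolic, Set.pair_comm]
  obtain ⟨p₂, hp₂⟩ : ∃ p : FinitePairs n M, parabolic n M p = Subgroup.closure
      {artinMk n M (FreeGroup.of s), artinMk n M (FreeGroup.of q)} := by
    rcases lt_or_gt_of_ne hsq with h | h
    · exact ⟨⟨(s, q), h, hfsq⟩, rfl⟩
    · refine ⟨⟨(q, s), h, by rw [hsym]; exact hfsq⟩, ?_⟩
      simp [parabolic, Set.pair_comm]
  -- the short path
  set A : Set (PresentedGroup (artinRels n M)) :=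
    Set.range fun l => artinMk n M (FreeGroup.of l) with hA
  set Gd := g₁ * g₂ * g₃ with hGd
  set Pl : List (ConedVert (PresentedGroup (artinRels n M)) (parabolic n M)) :=
    [.grp 1, .cone p₁ (QuotientGroup.mk 1), .grp (g₁ * P₁),
      .cone p₂ (QuotientGroup.mk (g₁ * P₁)), .grp Gd] with hPl
  have hadj₂ : conedAdj A (parabolic n M) (.cone p₁ (QuotientGroup.mk 1)) (.grp (g₁ * P₁)) := by
    show (QuotientGroup.mk (g₁ * P₁) : _ ⧸ parabolic n M p₁) = QuotientGroup.mk 1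
    rw [QuotientGroup.eq, hp₁, mul_one]
    exact Subgroup.inv_mem _ (Subgroup.mul_mem _ hg₁ hP₁mem)
  have hadj₄ : conedAdj A (parabolic n M) (.cone p₂ (QuotientGroup.mk (g₁ * P₁))) (.grp Gd) := by
    show (QuotientGroup.mk Gd : _ ⧸ parabolic n M p₂) = QuotientGroup.mk (g₁ * P₁)
    rw [QuotientGroup.eq, hp₂]
    have hx : (g₁ * P₁)⁻¹ * Gd = P₂ * g₃ := by
      rw [hGd, ← hvP]; group
    have hmem : (g₁ * P₁)⁻¹ * Gd ∈ Subgroup.closure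
        {artinMk n M (FreeGroup.of s), artinMk n M (FreeGroup.of q)} := by
      rw [hx]; exact Subgroup.mul_mem _ hP₂mem hg₃
    have := Subgroup.inv_mem _ hmem
    simpa [mul_inv_rev] using this
  have hpath : IsPathFrom (conedAdj A (parabolic n M)) Pl (.grp 1) (.grp Gd) := by
    refine ⟨rfl, rfl, ?_⟩
    refine List.isChain_cons_cons.2 ⟨rfl, ?_⟩
    refine List.isChain_cons_cons.2 ⟨hadj₂, ?_⟩
    refine List.isChain_cons_cons.2 ⟨rfl, ?_⟩
    refine List.isChain_cons_cons.2 ⟨hadj₄, ?_⟩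
    exact List.isChain_singleton _
  have hcost : pathCost (conedWt (parabolic n M)) Pl = 2 := by
    show (1 / 2 : ℝ) + (1 / 2 + (1 / 2 + (1 / 2 + 0))) = 2
    norm_num
  have hbdd : BddBelow { c | ∃ p, IsPathFrom (conedAdj A (parabolic n M)) p
      (ConedVert.grp 1) (.grp Gd) ∧ pathCost (conedWt (parabolic n M)) p = c } := by
    refine ⟨0, fun c hc => ?_⟩
    obtain ⟨p, -, rfl⟩ := hc
    refine aux_pathCost_nonneg _ (fun x y => ?_) p
    cases x <;> cases y <;> norm_num [conedWt]
  have hle : conedDist A (parabolic n M) (.grp 1) (.grp Gd) ≤ 2 :=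
    csInf_le hbdd ⟨Pl, hpath, hcost⟩
  rw [hgeo] at hle
  norm_num at hle
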